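/- Let D ∈ T_n and let f_1 < f_2 < ⋯ < f_s be the vertices of [2n] not covered by D, listed in increasing order. Then s = 2n − 2|D| is even, and the f_k alternate in parity beginning with an odd vertex and ending with an even vertex; that is, f_k is odd if k is odd and f_k is even if k is even. -/

import Mathlib

open scoped Classical
noncomputable section

/-- `D` is a symmetric Temperley–Lieb diagram on `4n` vertices, identified with a partial
matching of `[2n] = {1,…,2n}`: a set of pairwise disjoint pairs `(i,j)` with `1 ≤ i < j ≤ 2n`,
noncrossing, and such that no uncovered vertex lies strictly between the endpoints of any pair. -/
def IsTL (n : ℕ) (D : Finset (ℕ × ℕ)) : Prop :=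
  (∀ p ∈ D, 1 ≤ p.1 ∧ p.1 < p.2 ∧ p.2 ≤ 2 * n) ∧
  (∀ p ∈ D, ∀ q ∈ D, p ≠ q → p.1 ≠ q.1 ∧ p.1 ≠ q.2 ∧ p.2 ≠ q.1 ∧ p.2 ≠ q.2) ∧
  (∀ p ∈ D, ∀ q ∈ D, ¬(p.1 < q.1 ∧ q.1 < p.2 ∧ p.2 < q.2)) ∧
  (∀ p ∈ D, ∀ k, p.1 < k → k < p.2 → ∃ q ∈ D, k = q.1 ∨ k = q.2)

/-- Vertex `k` is covered by some pair of `D`. -/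
def Covered (D : Finset (ℕ × ℕ)) (k : ℕ) : Prop := ∃ p ∈ D, k = p.1 ∨ k = p.2

/-- The increasing list `f_1 < f_2 < ⋯ < f_s` of vertices of `[2n]` not covered by `D`. -/
def uncovList (n : ℕ) (D : Finset (ℕ × ℕ)) : List ℕ :=
  ((Finset.Icc 1 (2 * n)).filter fun k => ¬ Covered D k).sort (· ≤ ·)

/-- Cardinality of the union of endpoint-pairs over any subset of a matching. -/
lemma biUnion_card (n : ℕ) (D : Finset (ℕ × ℕ)) (hD : IsTL n D) (D' : Finset (ℕ × ℕ))
    (hsub : D' ⊆ D) :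
    (D'.biUnion fun p => ({p.1, p.2} : Finset ℕ)).card = 2 * D'.card := by
  rw [Finset.card_biUnion]
  · rw [Finset.sum_congr rfl (fun p hp => ?_), Finset.sum_const, smul_eq_mul, mul_comm]
    have h1 := hD.1 p (hsub hp)
    rw [Finset.card_insert_of_notMem (by simp [h1.2.1.ne]), Finset.card_singleton]
  · intro p hp q hq hpq
    have h2 := hD.2.1 p (hsub hp) q (hsub hq) hpq
    simp only [Finset.disjoint_insert_left, Finset.disjoint_singleton_left,
      Finset.mem_insert, Finset.mem_singleton]
    push_neg
    exact ⟨⟨h2.1, h2.2.1⟩, h2.2.2.1, h2.2.2.2⟩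

lemma covered_filter_eq (n : ℕ) (D : Finset (ℕ × ℕ)) (hD : IsTL n D) :
    ((Finset.Icc 1 (2 * n)).filter fun k => Covered D k)
      = D.biUnion fun p => ({p.1, p.2} : Finset ℕ) := by
  ext k
  simp only [Finset.mem_filter]
  simp only [Finset.mem_filter, Finset.mem_Icc, Finset.mem_biUnion, Finset.mem_insert,
    Finset.mem_singleton, Covered]
  constructor
  · rintro ⟨-, p, hp, hk⟩
    exact ⟨p, hp, by tauto⟩
  · rintro ⟨p, hp, hk⟩
    have h1 := hD.1 p hp
    exact ⟨by omega, p, hp, by tauto⟩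

lemma covered_card (n : ℕ) (D : Finset (ℕ × ℕ)) (hD : IsTL n D) :
    ((Finset.Icc 1 (2 * n)).filter fun k => Covered D k).card = 2 * D.card := by
  rw [covered_filter_eq n D hD, biUnion_card n D hD D le_rfl]

/-- The number of covered vertices below an uncovered vertex is even. -/
lemma covered_below_even (n : ℕ) (D : Finset (ℕ × ℕ)) (hD : IsTL n D) (f : ℕ)
    (hf : ¬ Covered D f) :
    ((Finset.Icc 1 (2 * n)).filter fun k => k < f ∧ Covered D k).card
      = 2 * (D.filter fun p => p.2 < f).card := by
  rw [← biUnion_card n D hD (D.filter fun p => p.2 < f) (Finset.filter_subset _ _)]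
  congr 1
  ext k
  simp only [Finset.mem_filter]
  simp only [Finset.mem_filter, Finset.mem_Icc, Finset.mem_biUnion, Finset.mem_insert,
    Finset.mem_singleton, Covered]
  constructor
  · rintro ⟨-, hkf, p, hp, hk⟩
    have h1 := hD.1 p hp
    refine ⟨p, ⟨hp, ?_⟩, by tauto⟩
    rcases hk with rfl | rfl
    · -- k = p.1 < f; need p.2 < f
      by_contra h
      have hfp2 : f ≠ p.2 := fun he => hf ⟨p, hp, Or.inr he⟩
      obtain ⟨q, hq, hkq⟩ := hD.2.2.2 p hp f hkf (by omega)
      exact hf ⟨q, hq, hkq⟩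
    · omega
  · rintro ⟨p, ⟨hp, hpf⟩, hk⟩
    have h1 := hD.1 p hp
    exact ⟨by omega, by omega, p, hp, by tauto⟩

/-- For `D ∈ T_n`, the uncovered vertices `f_1 < ⋯ < f_s` satisfy: `s = 2n − 2|D|` is even,
and `f_k` is odd iff `k` is odd (in 0-indexed terms, the entry at index `i` is odd iff `i`
is even). -/
theorem uncovered_alternate (n : ℕ) (D : Finset (ℕ × ℕ)) (hD : IsTL n D) :
    (uncovList n D).length = 2 * n - 2 * D.card ∧
    Even (uncovList n D).length ∧
    ∀ i < (uncovList n D).length, (Odd ((uncovList n D).getD i 0) ↔ Even i) := by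
  set U : Finset ℕ := (Finset.Icc 1 (2 * n)).filter fun k => ¬ Covered D k with hU
  set L : List ℕ := uncovList n D with hL
  have hlen : L.length = U.card := Finset.length_sort _
  have hCsub : ((Finset.Icc 1 (2 * n)).filter fun k => Covered D k) ⊆ Finset.Icc 1 (2 * n) :=
    Finset.filter_subset _ _
  have hsdiff : U = Finset.Icc 1 (2 * n) \ ((Finset.Icc 1 (2 * n)).filter fun k => Covered D k) := by
    ext x
    simp only [hU, Finset.mem_filter, Finset.mem_sdiff, Finset.mem_Icc]
    tauto
  have hcard : U.card = 2 * n - 2 * D.card := by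
    rw [hsdiff, Finset.card_sdiff_of_subset hCsub, covered_card n D hD, Nat.card_Icc]
    omega
  have hDle : 2 * D.card ≤ 2 * n := by
    have h2 := Finset.card_le_card hCsub
    rw [covered_card n D hD, Nat.card_Icc] at h2
    omega
  refine ⟨hlen.trans hcard, ?_, ?_⟩
  · rw [hlen, hcard]
    exact ⟨n - D.card, by omega⟩
  · intro i hi
    set f : ℕ := L.get ⟨i, hi⟩ with hf
    have hfL : f ∈ L := L.get_mem ⟨i, hi⟩
    have hfmem : f ∈ U := by
      rw [hU, ← Finset.mem_sort (α := ℕ) (· ≤ ·)]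
      exact hfL
    have hfI : 1 ≤ f ∧ f ≤ 2 * n ∧ ¬ Covered D f := by
      simp only [hU, Finset.mem_filter, Finset.mem_Icc] at hfmem
      tauto
    have hnd : L.Nodup := Finset.sort_nodup _ _
    have hsorted : L.Pairwise (· < ·) := (Finset.sortedLT_sort _).pairwise
    -- elements of U below f are exactly the first i elements of L
    have htake : ((Finset.Icc 1 (2 * n)).filter fun k => k < f ∧ ¬ Covered D k)
        = (L.take i).toFinset := by
      ext x
      simp only [Finset.mem_filter, Finset.mem_Icc, List.mem_toFinset]
      constructor
      · rintro ⟨⟨hx1, hx2⟩, hxf, hxc⟩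
        have hxU : x ∈ U := by
          rw [hU]
          exact Finset.mem_filter.mpr ⟨Finset.mem_Icc.mpr ⟨hx1, hx2⟩, hxc⟩
        have hxL : x ∈ L := by
          rw [hL, uncovList, ← hU]
          exact (Finset.mem_sort _).mpr hxU
        obtain ⟨j, hjx⟩ := List.get_of_mem hxL
        have hji : (j : ℕ) < i := by
          by_contra h
          push_neg at h
          rcases eq_or_lt_of_le h with he | hlt
          · have : x = f := by rw [← hjx, hf]; congr 1; exact Fin.ext he.symm
            omega
          · have := List.Pairwise.rel_get_of_lt hsorted (a := ⟨i, hi⟩) (b := j) hlt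
            rw [← hf, hjx] at this
            omega
        rw [← hjx]
        refine List.mem_take_iff_getElem.mpr ⟨j, ?_, by simp⟩
        simp only [lt_min_iff]
        exact ⟨hji, j.isLt⟩
      · intro hx
        have hxL : x ∈ L := List.mem_of_mem_take hx
        have hxU : x ∈ U := by
          rw [hU, ← Finset.mem_sort (α := ℕ) (· ≤ ·)]; exact hxL
        obtain ⟨j, hj, hjx⟩ := List.mem_take_iff_getElem.mp hx
        have hji : j < i := lt_of_lt_of_le hj (min_le_left _ _)
        have hxf : x < f := by
          have hjl : j < L.length := lt_of_lt_of_le hj (min_le_right _ _)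
          have := List.Pairwise.rel_get_of_lt hsorted (a := ⟨j, hjl⟩) (b := ⟨i, hi⟩) hji
          simp only [List.get_eq_getElem] at this
          rw [hjx] at this
          rw [hf]
          simpa using this
        simp only [hU, Finset.mem_filter, Finset.mem_Icc] at hxU
        exact ⟨⟨hxU.1.1, hxU.1.2⟩, hxf, hxU.2⟩
    have hti : ((Finset.Icc 1 (2 * n)).filter fun k => k < f ∧ ¬ Covered D k).card = i := by
      rw [htake, List.toFinset_card_of_nodup (hnd.sublist (List.take_sublist _ _)),
        List.length_take]
      omega
    -- total count below f
    have hbelow : ((Finset.Icc 1 (2 * n)).filter fun k => k < f).card = f - 1 := by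
      have h3 : ((Finset.Icc 1 (2 * n)).filter fun k => k < f) = Finset.Icc 1 (f - 1) := by
        ext x
        simp only [Finset.mem_filter, Finset.mem_Icc]
        omega
      rw [h3, Nat.card_Icc]
      omega
    have hsub2 : ((Finset.Icc 1 (2 * n)).filter fun k => k < f ∧ Covered D k)
        ⊆ (Finset.Icc 1 (2 * n)).filter fun k => k < f := by
      intro x hx
      simp only [Finset.mem_filter, Finset.mem_Icc] at hx ⊢
      tauto
    have hdiff2 : ((Finset.Icc 1 (2 * n)).filter fun k => k < f ∧ ¬ Covered D k)
        = ((Finset.Icc 1 (2 * n)).filter fun k => k < f)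
          \ ((Finset.Icc 1 (2 * n)).filter fun k => k < f ∧ Covered D k) := by
      ext x
      simp only [Finset.mem_filter, Finset.mem_sdiff, Finset.mem_Icc]
      tauto
    have hle2 := Finset.card_le_card hsub2
    rw [hdiff2, Finset.card_sdiff_of_subset hsub2, hbelow,
      covered_below_even n D hD f hfI.2.2] at hti
    rw [hbelow, covered_below_even n D hD f hfI.2.2] at hle2
    have hgd : L.getD i 0 = f := by
      rw [hf, List.getD_eq_getElem L 0 hi]
      simp
    rw [hgd, Nat.odd_iff, Nat.even_iff]
    omega
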